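/- Let A and B be m×m matrices over ℚ such that rank(A·B·A) = rank(A). Then there exists an invertible m×m matrix C over ℚ such that A·(B·A)ⁿ = A·Cⁿ for all n ≥ 0. -/

import Mathlib

open Matrix

private lemma mulVecLin_pow_aux {k : ℕ} (M : Matrix (Fin k) (Fin k) ℚ) (n : ℕ) :
    (M ^ n).mulVecLin = M.mulVecLin ^ n := by
  induction n with
  | zero => rw [pow_zero, pow_zero, Matrix.mulVecLin_one]; rfl
  | succ n ih => rw [pow_succ, pow_succ, Matrix.mulVecLin_mul, ih]; rfl

theorem stmt_5 (m : ℕ) (A B : Matrix (Fin m) (Fin m) ℚ)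
    (hrank : (A * B * A).rank = A.rank) :
    ∃ C : Matrix (Fin m) (Fin m) ℚ, IsUnit C ∧ ∀ n : ℕ, A * (B * A) ^ n = A * C ^ n := by
  classical
  set W : Submodule ℚ (Fin m → ℚ) := LinearMap.range (Matrix.mulVecLin Aᵀ) with hWdef
  set g : (Fin m → ℚ) →ₗ[ℚ] (Fin m → ℚ) := Matrix.mulVecLin (B * A)ᵀ with hgdef
  have htr : (A * B * A)ᵀ = (B * A)ᵀ * Aᵀ := by
    rw [mul_assoc, Matrix.transpose_mul]
  have hmap : W.map g = LinearMap.range (Matrix.mulVecLin (A * B * A)ᵀ) := by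
    rw [hWdef, hgdef, ← LinearMap.range_comp, ← Matrix.mulVecLin_mul, htr]
  have hsub : W.map g ≤ W := by
    rw [hmap, hWdef]
    have h2 : (A * B * A)ᵀ = Aᵀ * (A * B)ᵀ := by rw [Matrix.transpose_mul]
    rw [h2, Matrix.mulVecLin_mul]
    exact LinearMap.range_comp_le_range _ _
  have hfin : Module.finrank ℚ (W.map g) = Module.finrank ℚ W := by
    rw [hmap, hWdef]
    have h1 : ((A * B * A)ᵀ).rank = (Aᵀ).rank := by
      rw [Matrix.rank_transpose, Matrix.rank_transpose, hrank]
    simpa [Matrix.rank] using h1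
  have hWeq : W.map g = W := Submodule.eq_of_le_of_finrank_eq hsub hfin
  have hGW : ∀ x ∈ W, g x ∈ W := fun x hx => hWeq ▸ Submodule.mem_map_of_mem hx
  set gW : W →ₗ[ℚ] W := g.restrict hGW with hgW
  have hsurj : Function.Surjective gW := by
    rintro ⟨y, hy⟩
    rw [← hWeq] at hy
    obtain ⟨x, hx, hxy⟩ := hy
    exact ⟨⟨x, hx⟩, Subtype.ext hxy⟩
  have hinj : Function.Injective gW := LinearMap.injective_iff_surjective.mpr hsurj
  set eW : W ≃ₗ[ℚ] W := LinearEquiv.ofBijective gW ⟨hinj, hsurj⟩ with heW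
  obtain ⟨W', hc⟩ := Submodule.exists_isCompl W
  set P := Submodule.prodEquivOfIsCompl W W' hc with hP
  set e : (Fin m → ℚ) ≃ₗ[ℚ] (Fin m → ℚ) :=
    P.symm ≪≫ₗ (eW.prodCongr (LinearEquiv.refl ℚ W')) ≪≫ₗ P with he
  have key : ∀ x, ∀ hx : x ∈ W, e x = g x := by
    intro x hx
    have h1 : P.symm x = (⟨x, hx⟩, 0) :=
      Submodule.prodEquivOfIsCompl_symm_apply_left (p := W) (q := W') hc ⟨x, hx⟩
    have : e x = P (eW ⟨x, hx⟩, 0) := by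
      simp [he, h1]
    rw [this]
    have : (eW ⟨x, hx⟩ : Fin m → ℚ) = g x := rfl
    simp [hP, this]
  set E : (Fin m → ℚ) →ₗ[ℚ] (Fin m → ℚ) := e.toLinearMap with hE
  set D : Matrix (Fin m) (Fin m) ℚ := LinearMap.toMatrix' E with hD
  have hDE : D.mulVecLin = E := by
    rw [hD, ← Matrix.toLin'_apply', Matrix.toLin'_toMatrix']
  have hpow : ∀ n : ℕ, ∀ x, x ∈ W → (E ^ n) x = (g ^ n) x ∧ (g ^ n) x ∈ W := by
    intro n
    induction n with
    | zero => intro x hx; exact ⟨by simp, by simpa using hx⟩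
    | succ n ih =>
      intro x hx
      obtain ⟨h1, h2⟩ := ih (g x) (hGW x hx)
      refine ⟨?_, ?_⟩
      · rw [pow_succ, pow_succ, Module.End.mul_apply, Module.End.mul_apply,
          show E x = g x from key x hx]
        exact h1
      · rw [pow_succ, Module.End.mul_apply]; exact h2
  refine ⟨Dᵀ, ?_, ?_⟩
  · rw [Matrix.isUnit_iff_isUnit_det, Matrix.det_transpose, ← Matrix.isUnit_iff_isUnit_det]
    refine isUnit_iff_exists.mpr ⟨LinearMap.toMatrix' e.symm.toLinearMap, ?_, ?_⟩ <;>
      rw [hD, hE, ← LinearMap.toMatrix'_comp] <;> simp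
  · intro n
    rw [← Matrix.transpose_inj, Matrix.transpose_mul, Matrix.transpose_mul,
      Matrix.transpose_pow, Matrix.transpose_pow, Matrix.transpose_transpose]
    have hmv : (((B * A)ᵀ) ^ n * Aᵀ).mulVecLin = (D ^ n * Aᵀ).mulVecLin := by
      rw [Matrix.mulVecLin_mul, Matrix.mulVecLin_mul, mulVecLin_pow_aux, mulVecLin_pow_aux, hDE]
      refine LinearMap.ext fun v => ?_
      simp only [LinearMap.comp_apply]
      have hv : Aᵀ.mulVecLin v ∈ W := LinearMap.mem_range_self _ v
      exact ((hpow n _ hv).1).symm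
    exact Matrix.toLin'.injective (by rw [Matrix.toLin'_apply', Matrix.toLin'_apply', hmv])
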